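/- The worst-case construction for the specialized greedy heuristics: let C ≥ 4 be an even integer, let S_0 = {σ_1, …, σ_C} be a set of C distinct symbols, and let a, b be two further distinct symbols not in S_0. For 1 ≤ i ≤ C/2, set S_i = (S_0 \ {σ_{2i−1}, σ_{2i}}) ∪ {a, b}, and for 0 ≤ i ≤ C/2 let T_i be the collection of all (C−1)-element subsets of S_i. Then the collections T_0, T_1, …, T_{C/2} are pairwise disjoint; set T = T_0 ∪ T_1 ∪ ⋯ ∪ T_{C/2}. Then: (i) (T_0, T_1, …, T_{C/2}) is a valid pagination of T for capacity C, with C/2 + 1 pages; (ii) T also admits a valid pagination with exactly 3C/2 pages, all of volume exactly C, namely: for each 1 ≤ i ≤ C/2, the two pages { S_0 \ {σ_{2i−1}}, S_i \ {b} } and { S_0 \ {σ_{2i}}, S_i \ {a} }, together with, for each 1 ≤ i ≤ C/2, one page consisting of the C − 2 tiles of T_i containing both a and b. Hence this family of instances admits a valid pagination with 3C/(C+2) times more pages than a pagination with C/2 + 1 pages. -/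

import Mathlib

open Finset

/-- The volume of a page (a finite set of tiles): the number of distinct symbols. -/
def volume {α : Type*} [DecidableEq α] (p : Finset (Finset α)) : ℕ := (p.sup id).card

/-- A pagination of `T`: a partition of `T` into nonempty pages. -/
def IsPagination {α : Type*} (T : Finset (Finset α)) (P : Finset (Finset (Finset α))) : Prop :=
  (∀ p ∈ P, p.Nonempty) ∧
  (∀ p ∈ P, ∀ q ∈ P, p ≠ q → Disjoint p q) ∧
  (∀ t : Finset α, t ∈ T ↔ ∃ p ∈ P, t ∈ p)

/-- A pagination is valid for capacity `C` if every page has volume at most `C`. -/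
def IsValidPagination {α : Type*} [DecidableEq α] (C : ℕ) (T : Finset (Finset α))
    (P : Finset (Finset (Finset α))) : Prop :=
  IsPagination T P ∧ ∀ p ∈ P, volume p ≤ C

section Construction

variable {α : Type*} [DecidableEq α]

/-- `symbSet C σ a b 0 = S_0 = {σ 1, …, σ C}`; for `i ≥ 1`,
`symbSet C σ a b i = S_i = (S_0 \ {σ (2i-1), σ (2i)}) ∪ {a, b}`. -/
def symbSet (C : ℕ) (σ : ℕ → α) (a b : α) (i : ℕ) : Finset α :=
  if i = 0 then (Finset.Icc 1 C).image σ
  else ((Finset.Icc 1 C).image σ \ {σ (2 * i - 1), σ (2 * i)}) ∪ {a, b}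

/-- `tileSet C σ a b i = T_i`: all `(C-1)`-element subsets of `S_i`. -/
def tileSet (C : ℕ) (σ : ℕ → α) (a b : α) (i : ℕ) : Finset (Finset α) :=
  (symbSet C σ a b i).powersetCard (C - 1)

/-- The whole instance `T = T_0 ∪ T_1 ∪ ⋯ ∪ T_{C/2}`. -/
def allTiles (C : ℕ) (σ : ℕ → α) (a b : α) : Finset (Finset α) :=
  (Finset.range (C / 2 + 1)).biUnion (tileSet C σ a b)

/-- The optimal pagination `(T_0, T_1, …, T_{C/2})`. -/
def optPages (C : ℕ) (σ : ℕ → α) (a b : α) : Finset (Finset (Finset α)) :=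
  (Finset.range (C / 2 + 1)).image (tileSet C σ a b)

/-- The locked page `{ S_0 \ {σ (2i-1)}, S_i \ {b} }`. -/
def pageA (C : ℕ) (σ : ℕ → α) (a b : α) (i : ℕ) : Finset (Finset α) :=
  {(symbSet C σ a b 0).erase (σ (2 * i - 1)), (symbSet C σ a b i).erase b}

/-- The locked page `{ S_0 \ {σ (2i)}, S_i \ {a} }`. -/
def pageB (C : ℕ) (σ : ℕ → α) (a b : α) (i : ℕ) : Finset (Finset α) :=
  {(symbSet C σ a b 0).erase (σ (2 * i)), (symbSet C σ a b i).erase a}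

/-- The page made of the `C - 2` tiles of `T_i` containing both `a` and `b`. -/
def pageAB (C : ℕ) (σ : ℕ → α) (a b : α) (i : ℕ) : Finset (Finset α) :=
  (tileSet C σ a b i).filter (fun s => a ∈ s ∧ b ∈ s)

/-- The non-optimal pagination with `3C/2` pages. -/
def badPages (C : ℕ) (σ : ℕ → α) (a b : α) : Finset (Finset (Finset α)) :=
  (Finset.Icc 1 (C / 2)).biUnion
    (fun i => {pageA C σ a b i, pageB C σ a b i, pageAB C σ a b i})

end Construction

namespace Pag
variable {α : Type*} [DecidableEq α] {C : ℕ} {σ : ℕ → α} {a b : α}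

lemma symbSet_zero : symbSet C σ a b 0 = (Finset.Icc 1 C).image σ := if_pos rfl

lemma symbSet_pos {i : ℕ} (hi : i ≠ 0) :
    symbSet C σ a b i = ((Finset.Icc 1 C).image σ \ {σ (2*i-1), σ (2*i)}) ∪ {a, b} := if_neg hi

lemma mem_tileSet {i : ℕ} {t : Finset α} :
    t ∈ tileSet C σ a b i ↔ t ⊆ symbSet C σ a b i ∧ t.card = C - 1 := by
  simp [tileSet, Finset.mem_powersetCard]

section Basic
variable (hC : 4 ≤ C) (hE : Even C) (hab : a ≠ b)
  (hσ : ∀ i ∈ Finset.Icc 1 C, ∀ j ∈ Finset.Icc 1 C, σ i = σ j → i = j)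
  (ha : a ∉ (Finset.Icc 1 C).image σ) (hb : b ∉ (Finset.Icc 1 C).image σ)

lemma idx_mem {i : ℕ} (hi1 : 1 ≤ i) (hi2 : i ≤ C / 2) :
    (2*i-1) ∈ Finset.Icc 1 C ∧ 2*i ∈ Finset.Icc 1 C := by
  have h2 : 2*i ≤ C := by
    have := Nat.div_mul_le_self C 2
    omega
  constructor <;> simp <;> omega


include hσ in
lemma card_S0 : (symbSet C σ a b 0).card = C := by
  rw [symbSet_zero, Finset.card_image_of_injOn (fun i hi j hj h => hσ i hi j hj h)]
  simp

include hσ ha hb hab in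
lemma card_S {i : ℕ} (hi1 : 1 ≤ i) (hi2 : i ≤ C / 2) :
    (symbSet C σ a b i).card = C := by
  obtain ⟨h1, h2⟩ := idx_mem hi1 hi2
  rw [symbSet_pos (by omega)]
  have hne : σ (2*i-1) ≠ σ (2*i) := fun h => by
    have := hσ _ h1 _ h2 h; omega
  have hsub : ({σ (2*i-1), σ (2*i)} : Finset α) ⊆ (Finset.Icc 1 C).image σ := by
    intro x hx
    simp only [Finset.mem_insert, Finset.mem_singleton] at hx
    rcases hx with h | h <;> subst h <;> exact Finset.mem_image_of_mem σ ‹_›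
  have hd : Disjoint ((Finset.Icc 1 C).image σ \ {σ (2*i-1), σ (2*i)}) ({a, b} : Finset α) := by
    rw [Finset.disjoint_right]
    intro x hx hx'
    simp only [Finset.mem_insert, Finset.mem_singleton] at hx
    rcases hx with h | h <;> subst h <;> [exact ha (Finset.mem_sdiff.mp hx').1; exact hb (Finset.mem_sdiff.mp hx').1]
  rw [Finset.card_union_of_disjoint hd, Finset.card_sdiff_of_subset hsub,
    Finset.card_image_of_injOn (fun i hi j hj h => hσ i hi j hj h)]
  rw [Finset.card_pair hne, Finset.card_pair hab]
  simp only [Nat.card_Icc]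
  omega

include hσ in
lemma sigma_ne {k l : ℕ} (hk : k ∈ Finset.Icc 1 C) (hl : l ∈ Finset.Icc 1 C) (h : k ≠ l) :
    σ k ≠ σ l := fun h' => h (hσ k hk l hl h')

include hσ ha hb in
lemma mem_S_pos {i : ℕ} (hi1 : 1 ≤ i) (hi2 : i ≤ C / 2) {x : α} :
    x ∈ symbSet C σ a b i ↔
      (x ∈ (Finset.Icc 1 C).image σ ∧ x ≠ σ (2*i-1) ∧ x ≠ σ (2*i)) ∨ x = a ∨ x = b := by
  rw [symbSet_pos (by omega)]
  simp only [Finset.mem_union, Finset.mem_sdiff, Finset.mem_insert, Finset.mem_singleton]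
  tauto

include hσ ha hb in
lemma a_mem_S {i : ℕ} (hi1 : 1 ≤ i) (hi2 : i ≤ C / 2) : a ∈ symbSet C σ a b i := by
  rw [mem_S_pos hσ ha hb hi1 hi2]; tauto

include hσ ha hb in
lemma b_mem_S {i : ℕ} (hi1 : 1 ≤ i) (hi2 : i ≤ C / 2) : b ∈ symbSet C σ a b i := by
  rw [mem_S_pos hσ ha hb hi1 hi2]; tauto

include hσ ha hb in
lemma sigma_not_mem_S {i : ℕ} (hi1 : 1 ≤ i) (hi2 : i ≤ C / 2) :
    σ (2*i-1) ∉ symbSet C σ a b i ∧ σ (2*i) ∉ symbSet C σ a b i := by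
  obtain ⟨h1, h2⟩ := idx_mem hi1 hi2
  constructor <;> rw [mem_S_pos hσ ha hb hi1 hi2] <;>
    rintro ((⟨_, hx1, hx2⟩) | h | h) <;>
    first
    | simp at hx1 hx2
    | exact ha (h ▸ Finset.mem_image_of_mem σ (by assumption))
    | exact hb (h ▸ Finset.mem_image_of_mem σ (by assumption))

include hσ ha hb in
lemma sigma_mem_S {i : ℕ} (hi1 : 1 ≤ i) (hi2 : i ≤ C / 2) {k : ℕ}
    (hk : k ∈ Finset.Icc 1 C) (hk1 : k ≠ 2*i-1) (hk2 : k ≠ 2*i) :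
    σ k ∈ symbSet C σ a b i := by
  obtain ⟨h1, h2⟩ := idx_mem hi1 hi2
  rw [mem_S_pos hσ ha hb hi1 hi2]
  exact Or.inl ⟨Finset.mem_image_of_mem σ hk, sigma_ne hσ hk h1 hk1, sigma_ne hσ hk h2 hk2⟩

include hC hab hσ ha hb in
lemma inter_card {i j : ℕ} (hi : i < C / 2 + 1) (hj : j < C / 2 + 1) (hij : i ≠ j) :
    (symbSet C σ a b i ∩ symbSet C σ a b j).card ≤ C - 2 := by
  -- wlog j ≥ 1 and handle i = 0 or i ≥ 1
  have key : ∀ p q : ℕ, 1 ≤ q → q < C / 2 + 1 → p < C / 2 + 1 → p ≠ q →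
      (symbSet C σ a b p ∩ symbSet C σ a b q).card ≤ C - 2 := by
    intro p q hq1 hq hp hpq
    have hq2 : q ≤ C / 2 := by omega
    have hp2 : p ≤ C / 2 := by omega
    obtain ⟨h1, h2⟩ := idx_mem hq1 hq2
    -- σ (2q-1), σ(2q) ∈ S_p, ∉ S_q
    have hnot := sigma_not_mem_S hσ ha hb hq1 hq2
    have hin : σ (2*q-1) ∈ symbSet C σ a b p ∧ σ (2*q) ∈ symbSet C σ a b p := by
      rcases Nat.eq_zero_or_pos p with hp0 | hp0
      · subst hp0; rw [symbSet_zero]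
        exact ⟨Finset.mem_image_of_mem σ h1, Finset.mem_image_of_mem σ h2⟩
      · have e1 : 2*q-1 ≠ 2*p-1 := by omega
        have e2 : 2*q-1 ≠ 2*p := by omega
        have e3 : 2*q ≠ 2*p-1 := by omega
        have e4 : 2*q ≠ 2*p := by omega
        exact ⟨sigma_mem_S hσ ha hb hp0 hp2 h1 e1 e2,
          sigma_mem_S hσ ha hb hp0 hp2 h2 e3 e4⟩
    have hsub : symbSet C σ a b p ∩ symbSet C σ a b q ⊆
        symbSet C σ a b p \ {σ (2*q-1), σ (2*q)} := by
      intro x hx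
      rw [Finset.mem_inter] at hx
      rw [Finset.mem_sdiff]
      refine ⟨hx.1, ?_⟩
      simp only [Finset.mem_insert, Finset.mem_singleton]
      rintro (rfl | rfl)
      · exact hnot.1 hx.2
      · exact hnot.2 hx.2
    calc (symbSet C σ a b p ∩ symbSet C σ a b q).card
        ≤ (symbSet C σ a b p \ {σ (2*q-1), σ (2*q)}).card := Finset.card_le_card hsub
      _ ≤ (symbSet C σ a b p).card - ({σ (2*q-1), σ (2*q)} : Finset α).card := by
          rw [Finset.card_sdiff_of_subset (by
            intro x hx
            simp only [Finset.mem_insert, Finset.mem_singleton] at hx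
            rcases hx with rfl | rfl
            exacts [hin.1, hin.2])]
      _ ≤ C - 2 := by
          have hpair : ({σ (2*q-1), σ (2*q)} : Finset α).card = 2 :=
            Finset.card_pair (sigma_ne hσ h1 h2 (by omega))
          have hScard : (symbSet C σ a b p).card ≤ C := by
            rcases Nat.eq_zero_or_pos p with hp0 | hp0
            · subst hp0; exact (card_S0 hσ).le
            · exact (card_S hab hσ ha hb hp0 hp2).le
          omega
  rcases Nat.eq_zero_or_pos j with hj0 | hj0
  · subst hj0
    rw [Finset.inter_comm]
    exact key 0 i (by omega) hi (by omega) (by omega)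
  · exact key i j hj0 hj hi hij

include hC hab hσ ha hb in
lemma disjoint_tileSet {i j : ℕ} (hi : i < C/2+1) (hj : j < C/2+1) (hij : i ≠ j) :
    Disjoint (tileSet C σ a b i) (tileSet C σ a b j) := by
  rw [Finset.disjoint_left]
  intro t hti htj
  rw [mem_tileSet] at hti htj
  have hs : t ⊆ symbSet C σ a b i ∩ symbSet C σ a b j := Finset.subset_inter hti.1 htj.1
  have h1 := Finset.card_le_card hs
  have h2 := inter_card hC hab hσ ha hb hi hj hij
  have h3 := hti.2
  omega

lemma tile_eq_erase {S t : Finset α} (hC : 4 ≤ C) (hcard : S.card = C) (ht : t ⊆ S)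
    (htc : t.card = C - 1) : ∃ x ∈ S, t = S.erase x := by
  have h1 : (S \ t).card = 1 := by rw [Finset.card_sdiff_of_subset ht]; omega
  obtain ⟨x, hx⟩ := Finset.card_eq_one.mp h1
  have hxS : x ∈ S ∧ x ∉ t := by
    have := hx ▸ Finset.mem_singleton_self x
    exact Finset.mem_sdiff.mp this
  refine ⟨x, hxS.1, ?_⟩
  ext y
  simp only [Finset.mem_erase]
  constructor
  · intro hy
    exact ⟨fun h => hxS.2 (h ▸ hy), ht hy⟩
  · rintro ⟨hyx, hyS⟩
    by_contra hyt
    have : y ∈ S \ t := Finset.mem_sdiff.mpr ⟨hyS, hyt⟩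
    rw [hx, Finset.mem_singleton] at this
    exact hyx this

lemma erase_mem_tileSet {i : ℕ} {x : α} (hcard : (symbSet C σ a b i).card = C)
    (hx : x ∈ symbSet C σ a b i) : (symbSet C σ a b i).erase x ∈ tileSet C σ a b i := by
  rw [mem_tileSet]
  exact ⟨Finset.erase_subset _ _, by rw [Finset.card_erase_of_mem hx, hcard]⟩

lemma sup_tileSet_subset {i : ℕ} : (tileSet C σ a b i).sup id ⊆ symbSet C σ a b i :=
  Finset.sup_le (fun t ht => (mem_tileSet.mp ht).1)

include hC in
lemma sup_tileSet_eq {i : ℕ} (hcard : (symbSet C σ a b i).card = C) :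
    (tileSet C σ a b i).sup id = symbSet C σ a b i := by
  refine Finset.Subset.antisymm sup_tileSet_subset (fun x hx => ?_)
  -- find y ∈ S, y ≠ x
  have h2 : 2 ≤ (symbSet C σ a b i).card := by omega
  obtain ⟨y, hy, hyx⟩ := Finset.exists_mem_ne (s := symbSet C σ a b i) (by omega) x
  have ht := erase_mem_tileSet (C := C) hcard hy
  exact Finset.le_sup (f := id) ht (Finset.mem_erase.mpr ⟨hyx.symm, hx⟩)

include hC in
lemma tileSet_nonempty {i : ℕ} (hcard : (symbSet C σ a b i).card = C) :
    (tileSet C σ a b i).Nonempty := by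
  obtain ⟨t, ht, htc⟩ := Finset.exists_subset_card_eq (n := C - 1) (s := symbSet C σ a b i)
    (by omega)
  exact ⟨t, mem_tileSet.mpr ⟨ht, htc⟩⟩

include hC hab hσ ha hb in
lemma card_S' {i : ℕ} (hi : i < C / 2 + 1) : (symbSet C σ a b i).card = C := by
  rcases Nat.eq_zero_or_pos i with h0 | h0
  · subst h0; exact card_S0 hσ
  · exact card_S hab hσ ha hb h0 (by omega)

include hC hab hσ ha hb in
lemma tileSet_injOn : Set.InjOn (tileSet C σ a b) (Finset.range (C/2+1)) := by
  intro i hi j hj h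
  by_contra hij
  simp only [Finset.coe_range, Set.mem_Iio] at hi hj
  have hd := disjoint_tileSet hC hab hσ ha hb hi hj hij
  obtain ⟨t, ht⟩ := tileSet_nonempty hC (card_S' hC hab hσ ha hb hi)
  exact (Finset.disjoint_left.mp hd ht) (h ▸ ht)

include hC hab hσ ha hb in
lemma opt_ok : IsValidPagination C (allTiles C σ a b) (optPages C σ a b) ∧
    (optPages C σ a b).card = C / 2 + 1 := by
  constructor
  · refine ⟨⟨?_, ?_, ?_⟩, ?_⟩
    · rintro p hp
      simp only [optPages, Finset.mem_image, Finset.mem_range] at hp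
      obtain ⟨i, hi, rfl⟩ := hp
      exact tileSet_nonempty hC (card_S' hC hab hσ ha hb hi)
    · rintro p hp q hq hne
      simp only [optPages, Finset.mem_image, Finset.mem_range] at hp hq
      obtain ⟨i, hi, rfl⟩ := hp
      obtain ⟨j, hj, rfl⟩ := hq
      exact disjoint_tileSet hC hab hσ ha hb hi hj (fun h => hne (h ▸ rfl))
    · intro t
      simp only [allTiles, Finset.mem_biUnion, optPages, Finset.mem_image, Finset.mem_range]
      constructor
      · rintro ⟨i, hi, ht⟩; exact ⟨_, ⟨i, hi, rfl⟩, ht⟩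
      · rintro ⟨p, ⟨i, hi, rfl⟩, ht⟩; exact ⟨i, hi, ht⟩
    · rintro p hp
      simp only [optPages, Finset.mem_image, Finset.mem_range] at hp
      obtain ⟨i, hi, rfl⟩ := hp
      calc volume (tileSet C σ a b i) ≤ (symbSet C σ a b i).card :=
            Finset.card_le_card sup_tileSet_subset
        _ = C := card_S' hC hab hσ ha hb hi
  · rw [optPages, Finset.card_image_of_injOn (tileSet_injOn hC hab hσ ha hb)]
    simp

lemma erase_ne_erase {S : Finset α} {x y : α} (hx : x ∈ S) (hxy : x ≠ y) :
    S.erase x ≠ S.erase y := by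
  intro h
  have : x ∈ S.erase y := Finset.mem_erase.mpr ⟨hxy, hx⟩
  rw [← h] at this
  exact (Finset.mem_erase.mp this).1 rfl

lemma mem_pageA_iff {i : ℕ} {t : Finset α} : t ∈ pageA C σ a b i ↔
    t = (symbSet C σ a b 0).erase (σ (2*i-1)) ∨ t = (symbSet C σ a b i).erase b := by
  simp [pageA]

lemma mem_pageB_iff {i : ℕ} {t : Finset α} : t ∈ pageB C σ a b i ↔
    t = (symbSet C σ a b 0).erase (σ (2*i)) ∨ t = (symbSet C σ a b i).erase a := by
  simp [pageB]

lemma mem_pageAB_iff {i : ℕ} {t : Finset α} : t ∈ pageAB C σ a b i ↔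
    t ∈ tileSet C σ a b i ∧ a ∈ t ∧ b ∈ t := by
  simp [pageAB, Finset.mem_filter, and_assoc]

include ha in
lemma a_not_S0 : a ∉ symbSet C σ a b 0 := by rw [symbSet_zero]; exact ha

include hb in
lemma b_not_S0 : b ∉ symbSet C σ a b 0 := by rw [symbSet_zero]; exact hb

include hab hσ ha hb in
lemma a_mem_tA2 {i : ℕ} (hi1 : 1 ≤ i) (hi2 : i ≤ C / 2) :
    a ∈ (symbSet C σ a b i).erase b :=
  Finset.mem_erase.mpr ⟨hab, a_mem_S hσ ha hb hi1 hi2⟩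

include hab hσ ha hb in
lemma b_mem_tB2 {i : ℕ} (hi1 : 1 ≤ i) (hi2 : i ≤ C / 2) :
    b ∈ (symbSet C σ a b i).erase a :=
  Finset.mem_erase.mpr ⟨hab.symm, b_mem_S hσ ha hb hi1 hi2⟩

include hab hb in
lemma pageA_no_b {i : ℕ} {t : Finset α} (ht : t ∈ pageA C σ a b i) : b ∉ t := by
  rcases mem_pageA_iff.mp ht with rfl | rfl
  · exact fun h => b_not_S0 hb (Finset.mem_of_mem_erase h)
  · exact Finset.notMem_erase b _

include hab ha in
lemma pageB_no_a {i : ℕ} {t : Finset α} (ht : t ∈ pageB C σ a b i) : a ∉ t := by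
  rcases mem_pageB_iff.mp ht with rfl | rfl
  · exact fun h => a_not_S0 ha (Finset.mem_of_mem_erase h)
  · exact Finset.notMem_erase a _

include hσ in
lemma tA1_mem {i : ℕ} (hi1 : 1 ≤ i) (hi2 : i ≤ C / 2) :
    (symbSet C σ a b 0).erase (σ (2*i-1)) ∈ tileSet C σ a b 0 :=
  erase_mem_tileSet (card_S0 hσ) (by
    rw [symbSet_zero]; exact Finset.mem_image_of_mem σ (idx_mem hi1 hi2).1)

include hσ in
lemma tB1_mem {i : ℕ} (hi1 : 1 ≤ i) (hi2 : i ≤ C / 2) :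
    (symbSet C σ a b 0).erase (σ (2*i)) ∈ tileSet C σ a b 0 :=
  erase_mem_tileSet (card_S0 hσ) (by
    rw [symbSet_zero]; exact Finset.mem_image_of_mem σ (idx_mem hi1 hi2).2)

include hab hσ ha hb in
lemma tA2_mem {i : ℕ} (hi1 : 1 ≤ i) (hi2 : i ≤ C / 2) :
    (symbSet C σ a b i).erase b ∈ tileSet C σ a b i :=
  erase_mem_tileSet (card_S hab hσ ha hb hi1 hi2) (b_mem_S hσ ha hb hi1 hi2)

include hab hσ ha hb in
lemma tB2_mem {i : ℕ} (hi1 : 1 ≤ i) (hi2 : i ≤ C / 2) :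
    (symbSet C σ a b i).erase a ∈ tileSet C σ a b i :=
  erase_mem_tileSet (card_S hab hσ ha hb hi1 hi2) (a_mem_S hσ ha hb hi1 hi2)

include hC hab hσ ha hb in
lemma dAA {i j : ℕ} (hi1 : 1 ≤ i) (hi2 : i ≤ C / 2) (hj1 : 1 ≤ j) (hj2 : j ≤ C / 2)
    (hij : i ≠ j) : Disjoint (pageA C σ a b i) (pageA C σ a b j) := by
  rw [Finset.disjoint_left]
  intro t hti htj
  rcases mem_pageA_iff.mp hti with rfl | rfl <;> rcases mem_pageA_iff.mp htj with h | h
  · exact erase_ne_erase (by rw [symbSet_zero]; exact Finset.mem_image_of_mem σ (idx_mem hi1 hi2).1)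
      (sigma_ne hσ (idx_mem hi1 hi2).1 (idx_mem hj1 hj2).1 (by omega)) h
  · have : a ∈ (symbSet C σ a b 0).erase (σ (2*i-1)) := h ▸ a_mem_tA2 hab hσ ha hb hj1 hj2
    exact a_not_S0 ha (Finset.mem_of_mem_erase this)
  · have : a ∈ (symbSet C σ a b 0).erase (σ (2*j-1)) := h ▸ a_mem_tA2 hab hσ ha hb hi1 hi2
    exact a_not_S0 ha (Finset.mem_of_mem_erase this)
  · have m1 := tA2_mem hab hσ ha hb hi1 hi2
    have m2 := tA2_mem hab hσ ha hb hj1 hj2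
    rw [← h] at m2
    exact Finset.disjoint_left.mp
      (disjoint_tileSet hC hab hσ ha hb (by omega) (by omega) hij) m1 m2

include hC hab hσ ha hb in
lemma dBB {i j : ℕ} (hi1 : 1 ≤ i) (hi2 : i ≤ C / 2) (hj1 : 1 ≤ j) (hj2 : j ≤ C / 2)
    (hij : i ≠ j) : Disjoint (pageB C σ a b i) (pageB C σ a b j) := by
  rw [Finset.disjoint_left]
  intro t hti htj
  rcases mem_pageB_iff.mp hti with rfl | rfl <;> rcases mem_pageB_iff.mp htj with h | h
  · exact erase_ne_erase (by rw [symbSet_zero]; exact Finset.mem_image_of_mem σ (idx_mem hi1 hi2).2)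
      (sigma_ne hσ (idx_mem hi1 hi2).2 (idx_mem hj1 hj2).2 (by omega)) h
  · have : b ∈ (symbSet C σ a b 0).erase (σ (2*i)) := h ▸ b_mem_tB2 hab hσ ha hb hj1 hj2
    exact b_not_S0 hb (Finset.mem_of_mem_erase this)
  · have : b ∈ (symbSet C σ a b 0).erase (σ (2*j)) := h ▸ b_mem_tB2 hab hσ ha hb hi1 hi2
    exact b_not_S0 hb (Finset.mem_of_mem_erase this)
  · have m1 := tB2_mem hab hσ ha hb hi1 hi2
    have m2 := tB2_mem hab hσ ha hb hj1 hj2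
    rw [← h] at m2
    exact Finset.disjoint_left.mp
      (disjoint_tileSet hC hab hσ ha hb (by omega) (by omega) hij) m1 m2

include hab hσ ha hb in
lemma dAB {i j : ℕ} (hi1 : 1 ≤ i) (hi2 : i ≤ C / 2) (hj1 : 1 ≤ j) (hj2 : j ≤ C / 2) :
    Disjoint (pageA C σ a b i) (pageB C σ a b j) := by
  rw [Finset.disjoint_left]
  intro t hti htj
  rcases mem_pageA_iff.mp hti with rfl | rfl <;> rcases mem_pageB_iff.mp htj with h | h
  · exact erase_ne_erase (by rw [symbSet_zero]; exact Finset.mem_image_of_mem σ (idx_mem hi1 hi2).1)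
      (sigma_ne hσ (idx_mem hi1 hi2).1 (idx_mem hj1 hj2).2 (by omega)) h
  · have : b ∈ (symbSet C σ a b 0).erase (σ (2*i-1)) := h ▸ b_mem_tB2 hab hσ ha hb hj1 hj2
    exact b_not_S0 hb (Finset.mem_of_mem_erase this)
  · have : a ∈ (symbSet C σ a b 0).erase (σ (2*j)) := h ▸ a_mem_tA2 hab hσ ha hb hi1 hi2
    exact a_not_S0 ha (Finset.mem_of_mem_erase this)
  · have h1 : a ∈ (symbSet C σ a b j).erase a := h ▸ a_mem_tA2 hab hσ ha hb hi1 hi2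
    exact (Finset.notMem_erase a _) h1

include hab hb in
lemma dAAB {i j : ℕ} : Disjoint (pageA C σ a b i) (pageAB C σ a b j) := by
  rw [Finset.disjoint_left]
  intro t hti htj
  exact pageA_no_b hab hb hti (mem_pageAB_iff.mp htj).2.2

include hab ha in
lemma dBAB {i j : ℕ} : Disjoint (pageB C σ a b i) (pageAB C σ a b j) := by
  rw [Finset.disjoint_left]
  intro t hti htj
  exact pageB_no_a hab ha hti (mem_pageAB_iff.mp htj).2.1

include hC hab hσ ha hb in
lemma dABAB {i j : ℕ} (hi2 : i ≤ C / 2) (hj2 : j ≤ C / 2) (hij : i ≠ j) :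
    Disjoint (pageAB C σ a b i) (pageAB C σ a b j) := by
  rw [Finset.disjoint_left]
  intro t hti htj
  exact Finset.disjoint_left.mp (disjoint_tileSet hC hab hσ ha hb (by omega) (by omega) hij)
    (mem_pageAB_iff.mp hti).1 (mem_pageAB_iff.mp htj).1

lemma ne_of_disjoint {β : Type*} {s t : Finset β} (h : Disjoint s t) (hs : s.Nonempty) :
    s ≠ t := by
  rintro rfl
  exact hs.ne_empty (Finset.bot_eq_empty ▸ disjoint_self.mp h)

include hC hab hσ ha hb in
lemma pageAB_cover {i : ℕ} (hi1 : 1 ≤ i) (hi2 : i ≤ C / 2) {x : α}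
    (hx : x ∈ symbSet C σ a b i) : ∃ t ∈ pageAB C σ a b i, x ∈ t := by
  have hcard := card_S hab hσ ha hb hi1 hi2
  have h : ((symbSet C σ a b i) \ {a, b, x}).Nonempty := by
    rw [← Finset.card_pos]
    have h1 := Finset.card_le_card_sdiff_add_card (s := symbSet C σ a b i) (t := {a, b, x})
    have h2 : ({a, b, x} : Finset α).card ≤ 3 := by
      have u1 := Finset.card_insert_le a ({b, x} : Finset α)
      have u2 := Finset.card_insert_le b ({x} : Finset α)
      have u3 : ({x} : Finset α).card = 1 := Finset.card_singleton x
      omega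
    omega
  obtain ⟨y, hy⟩ := h
  rw [Finset.mem_sdiff] at hy
  simp only [Finset.mem_insert, Finset.mem_singleton, not_or] at hy
  have hyS := hy.1
  have hya := hy.2.1
  have hyb := hy.2.2.1
  have hyx := hy.2.2.2
  refine ⟨(symbSet C σ a b i).erase y, ?_, ?_⟩
  · rw [mem_pageAB_iff]
    exact ⟨erase_mem_tileSet hcard hyS,
      Finset.mem_erase.mpr ⟨fun h => hya h.symm, a_mem_S hσ ha hb hi1 hi2⟩,
      Finset.mem_erase.mpr ⟨fun h => hyb h.symm, b_mem_S hσ ha hb hi1 hi2⟩⟩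
  · exact Finset.mem_erase.mpr ⟨fun h => hyx h.symm, hx⟩

include hC hab hσ ha hb in
lemma pageAB_nonempty {i : ℕ} (hi1 : 1 ≤ i) (hi2 : i ≤ C / 2) :
    (pageAB C σ a b i).Nonempty := by
  obtain ⟨t, ht, _⟩ := pageAB_cover hC hab hσ ha hb hi1 hi2 (a_mem_S hσ ha hb hi1 hi2)
  exact ⟨t, ht⟩

include hC hab hσ ha hb in
lemma vol_pageAB {i : ℕ} (hi1 : 1 ≤ i) (hi2 : i ≤ C / 2) :
    volume (pageAB C σ a b i) = C := by
  have hsup : (pageAB C σ a b i).sup id = symbSet C σ a b i := by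
    apply Finset.Subset.antisymm
    · exact Finset.sup_le (s := pageAB C σ a b i) (f := id)
        fun t ht => (mem_tileSet.mp (mem_pageAB_iff.mp ht).1).1
    · intro x hx
      obtain ⟨t, ht, hxt⟩ := pageAB_cover hC hab hσ ha hb hi1 hi2 hx
      exact (Finset.le_sup (f := id) ht) hxt
  rw [volume, hsup, card_S hab hσ ha hb hi1 hi2]

include hC hab hσ ha hb in
lemma vol_pageA {i : ℕ} (hi1 : 1 ≤ i) (hi2 : i ≤ C / 2) :
    volume (pageA C σ a b i) = C := by
  have hu : (symbSet C σ a b 0).erase (σ (2*i-1)) ∪ (symbSet C σ a b i).erase b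
      = insert a ((symbSet C σ a b 0).erase (σ (2*i-1))) := by
    ext x
    simp only [Finset.mem_union, Finset.mem_insert, Finset.mem_erase]
    constructor
    · rintro (⟨h1, h2⟩ | ⟨h1, h2⟩)
      · exact Or.inr ⟨h1, h2⟩
      · rcases (mem_S_pos hσ ha hb hi1 hi2).mp h2 with ⟨h3, h4, h5⟩ | h | h
        · exact Or.inr ⟨h4, by rwa [symbSet_zero]⟩
        · exact Or.inl h
        · exact absurd h h1
    · rintro (h | ⟨h1, h2⟩)
      · exact Or.inr ⟨fun hxb => hab (h.symm.trans hxb),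
          by rw [h]; exact a_mem_S hσ ha hb hi1 hi2⟩
      · exact Or.inl ⟨h1, h2⟩
  have hanotin : a ∉ (symbSet C σ a b 0).erase (σ (2*i-1)) :=
    fun h => a_not_S0 ha (Finset.mem_of_mem_erase h)
  have hmem : σ (2*i-1) ∈ symbSet C σ a b 0 := by
    rw [symbSet_zero]; exact Finset.mem_image_of_mem σ (idx_mem hi1 hi2).1
  have hcard0 : ((symbSet C σ a b 0).erase (σ (2*i-1))).card = C - 1 := by
    rw [Finset.card_erase_of_mem hmem, card_S0 hσ]
  simp only [volume, pageA, Finset.sup_insert, Finset.sup_singleton, id,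
    Finset.sup_eq_union]
  rw [hu, Finset.card_insert_of_notMem hanotin, hcard0]
  omega

include hC hab hσ ha hb in
lemma vol_pageB {i : ℕ} (hi1 : 1 ≤ i) (hi2 : i ≤ C / 2) :
    volume (pageB C σ a b i) = C := by
  have hu : (symbSet C σ a b 0).erase (σ (2*i)) ∪ (symbSet C σ a b i).erase a
      = insert b ((symbSet C σ a b 0).erase (σ (2*i))) := by
    ext x
    simp only [Finset.mem_union, Finset.mem_insert, Finset.mem_erase]
    constructor
    · rintro (⟨h1, h2⟩ | ⟨h1, h2⟩)
      · exact Or.inr ⟨h1, h2⟩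
      · rcases (mem_S_pos hσ ha hb hi1 hi2).mp h2 with ⟨h3, h4, h5⟩ | h | h
        · exact Or.inr ⟨h5, by rwa [symbSet_zero]⟩
        · exact absurd h h1
        · exact Or.inl h
    · rintro (h | ⟨h1, h2⟩)
      · exact Or.inr ⟨fun hxa => hab (hxa.symm.trans h),
          by rw [h]; exact b_mem_S hσ ha hb hi1 hi2⟩
      · exact Or.inl ⟨h1, h2⟩
  have hbnotin : b ∉ (symbSet C σ a b 0).erase (σ (2*i)) :=
    fun h => b_not_S0 hb (Finset.mem_of_mem_erase h)
  have hmem : σ (2*i) ∈ symbSet C σ a b 0 := by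
    rw [symbSet_zero]; exact Finset.mem_image_of_mem σ (idx_mem hi1 hi2).2
  have hcard0 : ((symbSet C σ a b 0).erase (σ (2*i))).card = C - 1 := by
    rw [Finset.card_erase_of_mem hmem, card_S0 hσ]
  simp only [volume, pageB, Finset.sup_insert, Finset.sup_singleton, id,
    Finset.sup_eq_union]
  rw [hu, Finset.card_insert_of_notMem hbnotin, hcard0]
  omega

lemma mem_badPages_iff {p : Finset (Finset α)} : p ∈ badPages C σ a b ↔
    ∃ i, (1 ≤ i ∧ i ≤ C / 2) ∧
      (p = pageA C σ a b i ∨ p = pageB C σ a b i ∨ p = pageAB C σ a b i) := by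
  simp [badPages, Finset.mem_biUnion, Finset.mem_Icc, and_assoc]

include hC hE hab hσ ha hb in
lemma bad_cover (t : Finset α) :
    t ∈ allTiles C σ a b ↔ ∃ p ∈ badPages C σ a b, t ∈ p := by
  constructor
  · intro ht
    rw [allTiles, Finset.mem_biUnion] at ht
    obtain ⟨i, hi, ht⟩ := ht
    rw [Finset.mem_range] at hi
    obtain ⟨hsub, hcard⟩ := mem_tileSet.mp ht
    obtain ⟨c, hc⟩ := hE
    rcases Nat.eq_zero_or_pos i with rfl | hi1
    · obtain ⟨x, hx, rfl⟩ := tile_eq_erase hC (card_S0 hσ) hsub hcard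
      rw [symbSet_zero, Finset.mem_image] at hx
      obtain ⟨k, hk, rfl⟩ := hx
      rw [Finset.mem_Icc] at hk
      rcases Nat.even_or_odd k with ⟨m, hm⟩ | ⟨m, hm⟩
      · refine ⟨pageB C σ a b m, mem_badPages_iff.mpr ⟨m, ⟨by omega, by omega⟩,
          Or.inr (Or.inl rfl)⟩, ?_⟩
        rw [mem_pageB_iff]
        have : k = 2 * m := by omega
        rw [this]
        exact Or.inl rfl
      · refine ⟨pageA C σ a b (m+1), mem_badPages_iff.mpr ⟨m+1, ⟨by omega, by omega⟩,
          Or.inl rfl⟩, ?_⟩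
        rw [mem_pageA_iff]
        have : k = 2 * (m+1) - 1 := by omega
        rw [this]
        exact Or.inl rfl
    · have hi2 : i ≤ C / 2 := by omega
      obtain ⟨x, hx, rfl⟩ := tile_eq_erase hC (card_S hab hσ ha hb hi1 hi2) hsub hcard
      by_cases hxb : x = b
      · rw [hxb]
        exact ⟨pageA C σ a b i, mem_badPages_iff.mpr ⟨i, ⟨hi1, hi2⟩, Or.inl rfl⟩,
          mem_pageA_iff.mpr (Or.inr rfl)⟩
      by_cases hxa : x = a
      · rw [hxa]
        exact ⟨pageB C σ a b i, mem_badPages_iff.mpr ⟨i, ⟨hi1, hi2⟩, Or.inr (Or.inl rfl)⟩,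
          mem_pageB_iff.mpr (Or.inr rfl)⟩
      · refine ⟨pageAB C σ a b i, mem_badPages_iff.mpr ⟨i, ⟨hi1, hi2⟩,
          Or.inr (Or.inr rfl)⟩, ?_⟩
        rw [mem_pageAB_iff]
        exact ⟨ht, Finset.mem_erase.mpr ⟨fun h => hxa h.symm, a_mem_S hσ ha hb hi1 hi2⟩,
          Finset.mem_erase.mpr ⟨fun h => hxb h.symm, b_mem_S hσ ha hb hi1 hi2⟩⟩
  · rintro ⟨p, hp, htp⟩
    obtain ⟨i, ⟨hi1, hi2⟩, hp⟩ := mem_badPages_iff.mp hp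
    rw [allTiles, Finset.mem_biUnion]
    rcases hp with rfl | rfl | rfl
    · rcases mem_pageA_iff.mp htp with rfl | rfl
      · exact ⟨0, Finset.mem_range.mpr (by omega), tA1_mem hσ hi1 hi2⟩
      · exact ⟨i, Finset.mem_range.mpr (by omega), tA2_mem hab hσ ha hb hi1 hi2⟩
    · rcases mem_pageB_iff.mp htp with rfl | rfl
      · exact ⟨0, Finset.mem_range.mpr (by omega), tB1_mem hσ hi1 hi2⟩
      · exact ⟨i, Finset.mem_range.mpr (by omega), tB2_mem hab hσ ha hb hi1 hi2⟩
    · exact ⟨i, Finset.mem_range.mpr (by omega), (mem_pageAB_iff.mp htp).1⟩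

include hC hab hσ ha hb in
lemma bad_disjoint : ∀ p ∈ badPages C σ a b, ∀ q ∈ badPages C σ a b, p ≠ q →
    Disjoint p q := by
  intro p hp q hq hne
  obtain ⟨i, ⟨hi1, hi2⟩, hp⟩ := mem_badPages_iff.mp hp
  obtain ⟨j, ⟨hj1, hj2⟩, hq⟩ := mem_badPages_iff.mp hq
  rcases hp with rfl | rfl | rfl <;> rcases hq with rfl | rfl | rfl
  · rcases eq_or_ne i j with rfl | hij
    · exact absurd rfl hne
    · exact dAA hC hab hσ ha hb hi1 hi2 hj1 hj2 hij
  · exact dAB hab hσ ha hb hi1 hi2 hj1 hj2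
  · exact dAAB hab hb
  · exact (dAB hab hσ ha hb hj1 hj2 hi1 hi2).symm
  · rcases eq_or_ne i j with rfl | hij
    · exact absurd rfl hne
    · exact dBB hC hab hσ ha hb hi1 hi2 hj1 hj2 hij
  · exact dBAB hab ha
  · exact (dAAB hab hb).symm
  · exact (dBAB hab ha).symm
  · rcases eq_or_ne i j with rfl | hij
    · exact absurd rfl hne
    · exact dABAB hC hab hσ ha hb hi2 hj2 hij

include hC hE hab hσ ha hb in
lemma bad_card : (badPages C σ a b).card = 3 * C / 2 := by
  rw [badPages, Finset.card_biUnion]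
  · have h3 : ∀ i ∈ Finset.Icc 1 (C / 2),
        ({pageA C σ a b i, pageB C σ a b i, pageAB C σ a b i} :
          Finset (Finset (Finset α))).card = 3 := by
      intro i hi
      rw [Finset.mem_Icc] at hi
      obtain ⟨hi1, hi2⟩ := hi
      have nAB : pageA C σ a b i ≠ pageB C σ a b i :=
        ne_of_disjoint (dAB hab hσ ha hb hi1 hi2 hi1 hi2) (Finset.insert_nonempty _ _)
      have nAAB : pageA C σ a b i ≠ pageAB C σ a b i :=
        ne_of_disjoint (dAAB hab hb) (Finset.insert_nonempty _ _)
      have nBAB : pageB C σ a b i ≠ pageAB C σ a b i :=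
        ne_of_disjoint (dBAB hab ha) (Finset.insert_nonempty _ _)
      rw [Finset.card_insert_of_notMem (by simp [nAB, nAAB]),
        Finset.card_insert_of_notMem (by simp [nBAB]), Finset.card_singleton]
    rw [Finset.sum_congr rfl h3, Finset.sum_const, Nat.card_Icc, smul_eq_mul]
    obtain ⟨c, hc⟩ := hE
    omega
  · intro i hi j hj hij
    rw [Finset.mem_coe, Finset.mem_Icc] at hi hj
    obtain ⟨hi1, hi2⟩ := hi
    obtain ⟨hj1, hj2⟩ := hj
    simp only [Function.onFun]
    rw [Finset.disjoint_left]
    intro p hp hq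
    simp only [Finset.mem_insert, Finset.mem_singleton] at hp hq
    have hABne := pageAB_nonempty hC hab hσ ha hb hi1 hi2
    rcases hp with rfl | rfl | rfl <;> rcases hq with h | h | h
    · exact ne_of_disjoint (dAA hC hab hσ ha hb hi1 hi2 hj1 hj2 hij)
        (Finset.insert_nonempty _ _) h
    · exact ne_of_disjoint (dAB hab hσ ha hb hi1 hi2 hj1 hj2)
        (Finset.insert_nonempty _ _) h
    · exact ne_of_disjoint (dAAB hab hb) (Finset.insert_nonempty _ _) h
    · exact ne_of_disjoint (dAB hab hσ ha hb hj1 hj2 hi1 hi2).symm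
        (Finset.insert_nonempty _ _) h
    · exact ne_of_disjoint (dBB hC hab hσ ha hb hi1 hi2 hj1 hj2 hij)
        (Finset.insert_nonempty _ _) h
    · exact ne_of_disjoint (dBAB hab ha) (Finset.insert_nonempty _ _) h
    · exact ne_of_disjoint (dAAB hab hb).symm hABne h
    · exact ne_of_disjoint (dBAB hab ha).symm hABne h
    · exact ne_of_disjoint (dABAB hC hab hσ ha hb hi2 hj2 hij) hABne h

end Basic
end Pag

/-- The worst-case construction for the specialized greedy heuristics: the `T_i` are
pairwise disjoint; `(T_0, …, T_{C/2})` is a valid pagination of `T` with `C/2 + 1`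
pages; and `T` also admits a valid pagination with exactly `3C/2` pages, all of volume
exactly `C` — whence the ratio `3C/(C+2)` between the two numbers of pages. -/
theorem stmt12 {α : Type*} [DecidableEq α] (C : ℕ) (hC : 4 ≤ C) (hE : Even C)
    (σ : ℕ → α) (a b : α) (hab : a ≠ b)
    (hσ : ∀ i ∈ Finset.Icc 1 C, ∀ j ∈ Finset.Icc 1 C, σ i = σ j → i = j)
    (ha : a ∉ (Finset.Icc 1 C).image σ) (hb : b ∉ (Finset.Icc 1 C).image σ) :
    (∀ i ∈ Finset.range (C / 2 + 1), ∀ j ∈ Finset.range (C / 2 + 1), i ≠ j →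
      Disjoint (tileSet C σ a b i) (tileSet C σ a b j)) ∧
    (IsValidPagination C (allTiles C σ a b) (optPages C σ a b) ∧
      (optPages C σ a b).card = C / 2 + 1) ∧
    (IsValidPagination C (allTiles C σ a b) (badPages C σ a b) ∧
      (badPages C σ a b).card = 3 * C / 2 ∧
      ∀ p ∈ badPages C σ a b, volume p = C) ∧
    ((3 * C / 2 : ℕ) : ℚ) = (3 * C : ℚ) / ((C : ℚ) + 2) * (((C / 2 : ℕ) : ℚ) + 1) := by
  have hvol : ∀ p ∈ badPages C σ a b, volume p = C := by
    intro p hp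
    obtain ⟨i, ⟨hi1, hi2⟩, hp⟩ := Pag.mem_badPages_iff.mp hp
    rcases hp with rfl | rfl | rfl
    · exact Pag.vol_pageA hC hab hσ ha hb hi1 hi2
    · exact Pag.vol_pageB hC hab hσ ha hb hi1 hi2
    · exact Pag.vol_pageAB hC hab hσ ha hb hi1 hi2
  refine ⟨?_, Pag.opt_ok hC hab hσ ha hb,
    ⟨⟨⟨?_, Pag.bad_disjoint hC hab hσ ha hb, Pag.bad_cover hC hE hab hσ ha hb⟩,
      fun p hp => (hvol p hp).le⟩, Pag.bad_card hC hE hab hσ ha hb, hvol⟩, ?_⟩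
  · intro i hi j hj hij
    exact Pag.disjoint_tileSet hC hab hσ ha hb (Finset.mem_range.mp hi)
      (Finset.mem_range.mp hj) hij
  · intro p hp
    obtain ⟨i, ⟨hi1, hi2⟩, hp⟩ := Pag.mem_badPages_iff.mp hp
    rcases hp with rfl | rfl | rfl
    · exact Finset.insert_nonempty _ _
    · exact Finset.insert_nonempty _ _
    · exact Pag.pageAB_nonempty hC hab hσ ha hb hi1 hi2
  · obtain ⟨c, hc⟩ := hE
    have h1 : (3 * C / 2 : ℕ) = 3 * c := by omega
    have h2 : (C / 2 : ℕ) = c := by omega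
    have hc2 : 2 ≤ c := by omega
    rw [h1, h2, hc]
    have hne : ((c : ℚ) + c + 2) ≠ 0 := by positivity
    push_cast
    field_simp
    ring
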